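/- Let C be the completion of an algebraic closure of a complete discrete valuation field K of mixed characteristic (0, p). Let R* = lim←(C_n*) where each C_n = C and transition maps are x ↦ x^p, and R = R* ∪ {0}. With componentwise multiplication, and addition defined by (x_n)+(y_n) = (z_n) where z_n = lim_m (x_{n+m}+y_{n+m})^{p^m}, R is a ring of characteristic p in which every element has a unique p-th root (i.e., R is perfect). -/

import Mathlib

open Filter

/-- The carrier of the tilt `R = lim←(C, x ↦ x^p) ∪ {0}`: sequences `(x_n)` in `C`
with `x_{n+1}^p = x_n` (the zero sequence corresponds to `0`). -/
def TiltCarrier (C : Type) [Field C] (p : ℕ) : Type :=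
  {x : ℕ → C // ∀ n, (x (n + 1)) ^ p = x n}

namespace TiltAux

lemma nn_max_pow (a b : NNReal) (k : ℕ) : (max a b) ^ k = max (a ^ k) (b ^ k) :=
  Monotone.map_max (pow_left_mono k)

variable {p : ℕ} [hp : Fact p.Prime] {C : Type} [Field C] [Valued C NNReal]

local notation "vv" => (Valued.v : Valuation C NNReal)

lemma v_natCast_le_one (n : ℕ) : vv (n : C) ≤ 1 := by
  induction n with
  | zero => simp
  | succ k ih =>
    push_cast
    exact Valuation.map_add_le _ ih (by simp)

lemma v_choose_le (u : NNReal) (hu : vv (p : C) ≤ u) {k : ℕ} (h0 : k ≠ 0) (hk : k < p) :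
    vv ((p.choose k : ℕ) : C) ≤ u := by
  obtain ⟨c, hc⟩ := hp.out.dvd_choose_self h0 hk
  rw [hc]
  push_cast
  rw [map_mul]
  calc vv (p : C) * vv (c : C) ≤ u * 1 := mul_le_mul' hu (v_natCast_le_one c)
  _ = u := mul_one u

/-- binomial estimate: `v((a+b)^p - a^p - b^p) ≤ u * t^p`. -/
lemma h_binom (u t : NNReal) (hu : vv (p : C) ≤ u) (a b : C) (ha : vv a ≤ t) (hb : vv b ≤ t) :
    vv ((a + b) ^ p - a ^ p - b ^ p) ≤ u * t ^ p := by
  obtain ⟨q, hq⟩ : ∃ q, p = q + 1 := ⟨p - 1, (Nat.succ_pred_eq_of_pos hp.out.pos).symm⟩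
  have hexp : (a + b) ^ p - a ^ p - b ^ p
      = ∑ k ∈ Finset.range q, a ^ (k+1) * b ^ (p - (k+1)) * ((p.choose (k+1) : ℕ) : C) := by
    rw [hq, add_pow, Finset.sum_range_succ, Finset.sum_range_succ']
    simp
  rw [hexp]
  apply Valuation.map_sum_le
  intro k hk
  have hk' := Finset.mem_range.mp hk
  have hk1 : k + 1 < p := by omega
  rw [map_mul, map_mul, map_pow, map_pow]
  have h1 : vv a ^ (k+1) * vv b ^ (p - (k+1)) ≤ t ^ p := by
    calc vv a ^ (k+1) * vv b ^ (p - (k+1)) ≤ t ^ (k+1) * t ^ (p - (k+1)) :=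
          mul_le_mul' (pow_le_pow_left' ha _) (pow_le_pow_left' hb _)
    _ = t ^ p := by rw [← pow_add]; congr 1; omega
  calc vv a ^ (k+1) * vv b ^ (p - (k+1)) * vv ((p.choose (k+1) : ℕ) : C)
      ≤ t ^ p * u := mul_le_mul' h1 (v_choose_le u hu (Nat.succ_ne_zero k) hk1)
  _ = u * t ^ p := mul_comm _ _


/-- `v(c^p - d^p) ≤ max (v(c-d)^p) (u * T^(p-1) * v(c-d))`. -/
lemma f_pow (u T : NNReal) (hu : vv (p : C) ≤ u) (c d : C)
    (hd : vv d ≤ T) (heT : vv (c - d) ≤ T) :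
    vv (c ^ p - d ^ p) ≤ max ((vv (c - d)) ^ p) (u * T ^ (p - 1) * vv (c - d)) := by
  obtain ⟨q, hq⟩ : ∃ q, p = q + 1 := ⟨p - 1, (Nat.succ_pred_eq_of_pos hp.out.pos).symm⟩
  set e := c - d with he
  have hc : c = d + e := by rw [he]; ring
  have hexp : c ^ p - d ^ p
      = e ^ p + ∑ k ∈ Finset.range q, d ^ (k+1) * e ^ (p - (k+1)) * ((p.choose (k+1) : ℕ) : C) := by
    have h2 : c ^ p - d ^ p = ((d + e) ^ p - d ^ p - e ^ p) + e ^ p := by rw [← hc]; ring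
    rw [h2]
    have h3 : (d + e) ^ p - d ^ p - e ^ p
        = ∑ k ∈ Finset.range q, d ^ (k+1) * e ^ (p - (k+1)) * ((p.choose (k+1) : ℕ) : C) := by
      rw [hq, add_pow, Finset.sum_range_succ, Finset.sum_range_succ']
      simp
    rw [h3]; ring
  rw [hexp]
  apply Valuation.map_add_le
  · exact le_max_of_le_left (by rw [map_pow])
  · apply le_max_of_le_right
    apply Valuation.map_sum_le
    intro k hk
    have hk' := Finset.mem_range.mp hk
    have hk1 : k + 1 < p := by omega
    rw [map_mul, map_mul, map_pow, map_pow]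
    have hsub : p - (k+1) = (p - (k+2)) + 1 := by omega
    have h1 : vv d ^ (k+1) * vv e ^ (p - (k+1)) ≤ T ^ (p-1) * vv e := by
      have hre : vv d ^ (k+1) * vv e ^ (p - (k+1))
          = (vv d ^ (k+1) * vv e ^ (p - (k+2))) * vv e := by rw [hsub]; ring
      rw [hre]
      have : vv d ^ (k+1) * vv e ^ (p - (k+2)) ≤ T ^ (p-1) := by
        calc vv d ^ (k+1) * vv e ^ (p - (k+2)) ≤ T ^ (k+1) * T ^ (p - (k+2)) :=
              mul_le_mul' (pow_le_pow_left' hd _) (pow_le_pow_left' heT _)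
        _ = T ^ (p-1) := by rw [← pow_add]; congr 1; omega
      exact mul_le_mul_left this _
    calc vv d ^ (k+1) * vv e ^ (p - (k+1)) * vv ((p.choose (k+1) : ℕ) : C)
        ≤ (T ^ (p-1) * vv e) * u :=
          mul_le_mul' h1 (v_choose_le u hu (Nat.succ_ne_zero k) hk1)
    _ = u * T ^ (p-1) * vv e := by ring

/-- Iterated: `v(c^(p^j) - d^(p^j)) ≤ u^(j+1) * T^(p^j)`. -/
lemma g_pow (u T : NNReal) (hu : vv (p : C) ≤ u) (hu1 : u ≤ 1) (c d : C)
    (hc : vv c ≤ T) (hd : vv d ≤ T) (he : vv (c - d) ≤ u * T) (j : ℕ) :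
    vv (c ^ p ^ j - d ^ p ^ j) ≤ u ^ (j + 1) * T ^ p ^ j := by
  induction j with
  | zero => simpa using he
  | succ j ih =>
    have hdj : vv (d ^ p ^ j) ≤ T ^ p ^ j := by
      rw [map_pow]; exact pow_le_pow_left' hd _
    have heT : vv (c ^ p ^ j - d ^ p ^ j) ≤ T ^ p ^ j :=
      le_trans ih (by
        calc u ^ (j+1) * T ^ p ^ j ≤ 1 * T ^ p ^ j :=
              mul_le_mul_left (pow_le_one' hu1 _) _
        _ = T ^ p ^ j := one_mul _)
    have key := f_pow u (T ^ p ^ j) hu (c ^ p ^ j) (d ^ p ^ j) hdj heT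
    have hrw : ∀ z : C, (z ^ p ^ j) ^ p = z ^ p ^ (j+1) := by
      intro z; rw [← pow_mul, pow_succ]
    rw [hrw, hrw] at key
    refine le_trans key (max_le ?_ ?_)
    · calc (vv (c ^ p ^ j - d ^ p ^ j)) ^ p ≤ (u ^ (j+1) * T ^ p ^ j) ^ p :=
            pow_le_pow_left' ih _
      _ = u ^ ((j+1)*p) * T ^ (p ^ j * p) := by rw [mul_pow, ← pow_mul, ← pow_mul]
      _ ≤ u ^ (j+2) * T ^ p ^ (j+1) := by
          rw [← pow_succ]
          exact mul_le_mul_left (pow_le_pow_of_le_one zero_le hu1 (by nlinarith [hp.out.two_le])) _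
    · calc u * (T ^ p ^ j) ^ (p-1) * vv (c ^ p ^ j - d ^ p ^ j)
          ≤ u * (T ^ p ^ j) ^ (p-1) * (u ^ (j+1) * T ^ p ^ j) := mul_le_mul_right ih _
      _ = u ^ (j+2) * ((T ^ p ^ j) ^ (p-1) * T ^ p ^ j) := by ring
      _ = u ^ (j+2) * T ^ p ^ (j+1) := by
          congr 1
          rw [← pow_succ, Nat.sub_add_cancel hp.out.one_lt.le, ← pow_mul, ← pow_succ]


lemma tendsto_zero_of_v_le {f : ℕ → C} {g : ℕ → NNReal} (hfg : ∀ m, vv (f m) ≤ g m)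
    (hg : Tendsto g atTop (nhds 0)) : Tendsto f atTop (nhds (0 : C)) := by
  rw [Filter.tendsto_def]
  intro s hs
  obtain ⟨γ, hγ⟩ := Valued.mem_nhds_zero.mp hs
  have hpos : (0 : NNReal) < MonoidWithZeroHom.ValueGroup₀.embedding γ.1 := by
    simpa using MonoidWithZeroHom.ValueGroup₀.embedding_strictMono (Units.zero_lt γ)
  have hev : ∀ᶠ m in atTop, g m < MonoidWithZeroHom.ValueGroup₀.embedding γ.1 := hg.eventually_lt_const hpos
  filter_upwards [hev] with m hm
  exact hγ ((Valuation.restrict_lt_iff_lt_embedding (v := vv)).mpr (lt_of_le_of_lt (hfg m) hm))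

lemma v_lim_le {b : ℕ → C} {L c : C} {B : NNReal} (hb : Tendsto b atTop (nhds L))
    (h : ∀ m, vv (b m - c) ≤ B) : vv (L - c) ≤ B := by
  by_contra hlt
  push_neg at hlt
  have hne : vv (L - c) ≠ 0 := by
    intro h0; rw [h0] at hlt; exact (not_lt.mpr (zero_le : (0 : NNReal) ≤ B)) hlt
  set γ := Units.mk0 (Valued.v.restrict (L - c))
    ((Valuation.restrict_pos_iff _ _).mpr (pos_iff_ne_zero.mpr hne)).ne' with hγ
  have htz : Tendsto (fun m => b m - L) atTop (nhds (0 : C)) := by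
    simpa using hb.sub (tendsto_const_nhds : Tendsto (fun _ : ℕ => L) atTop (nhds L))
  have hmem : {x : C | Valued.v.restrict x < γ.1} ∈ nhds (0 : C) :=
    Valued.mem_nhds_zero.mpr ⟨γ, subset_rfl⟩
  have hev : ∀ᶠ m in atTop, vv (b m - L) < vv (L - c) := by
    have := (Filter.tendsto_def.mp htz) _ hmem
    filter_upwards [this] with m hm
    simpa [γ] using (Valuation.restrict_lt_iff_lt_embedding (v := vv)).mp hm
  obtain ⟨m, hm⟩ := hev.exists
  have : vv (b m - c) = vv (L - c) := by
    have hrw : b m - c = (b m - L) + (L - c) := by ring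
    rw [hrw, Valuation.map_add_eq_of_lt_right _ hm]
  exact absurd (this ▸ h m) (not_le.mpr hlt)

variable (p) in
/-- The `m`-th term of the defining sequence for addition at level `n`. -/
def aseq (x y : ℕ → C) (n m : ℕ) : C := (x (n + m) + y (n + m)) ^ p ^ m

lemma entry_pow_eq (x : TiltCarrier C p) (n m : ℕ) : (x.1 (n + m)) ^ p ^ m = x.1 n := by
  induction m with
  | zero => simp
  | succ m ih =>
    have : x.1 (n + (m+1)) ^ p ^ (m+1) = (x.1 ((n + m) + 1) ^ p) ^ p ^ m := by
      rw [← pow_mul, ← pow_succ']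
      rfl
    rw [this, x.2 (n+m), ih]

lemma v_entry (x : TiltCarrier C p) (n m : ℕ) :
    (vv (x.1 (n + m))) ^ p ^ m = vv (x.1 n) := by
  rw [← map_pow, entry_pow_eq]

variable (p) in
/-- Uniform bound `W = max(v xₙ, v yₙ, 1)`. -/
noncomputable def Wb (x y : TiltCarrier C p) (n : ℕ) : NNReal :=
  max (vv (x.1 n)) (max (vv (y.1 n)) 1)

lemma Wb_pow (x y : TiltCarrier C p) (n m : ℕ) :
    (Wb p x y (n + m)) ^ p ^ m = Wb p x y n := by
  rw [Wb, Wb, nn_max_pow, nn_max_pow, one_pow, v_entry, v_entry]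

lemma add_step (u : NNReal) (hu : vv (p : C) ≤ u) (hu1 : u ≤ 1)
    (x y : TiltCarrier C p) (n m : ℕ) :
    vv (aseq p x.1 y.1 n (m+1) - aseq p x.1 y.1 n m) ≤ u ^ (m+1) * Wb p x y n := by
  set a := x.1 (n + (m+1)) with ha
  set b := y.1 (n + (m+1)) with hb
  set t := Wb p x y (n + (m+1)) with ht
  have hva : vv a ≤ t := le_max_left _ _
  have hvb : vv b ≤ t := le_trans (le_max_left _ _) (le_max_right _ _)
  have hxa : a ^ p = x.1 (n + m) := x.2 (n+m)
  have hyb : b ^ p = y.1 (n + m) := y.2 (n+m)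
  set c := (a + b) ^ p with hc
  set d := x.1 (n + m) + y.1 (n + m) with hd
  have hvc : vv c ≤ t ^ p := by
    rw [hc, map_pow]
    exact pow_le_pow_left' (Valuation.map_add_le _ hva hvb) p
  have hvd : vv d ≤ t ^ p := by
    rw [hd, ← hxa, ← hyb]
    exact Valuation.map_add_le _ (by rw [map_pow]; exact pow_le_pow_left' hva p)
      (by rw [map_pow]; exact pow_le_pow_left' hvb p)
  have hcd : vv (c - d) ≤ u * t ^ p := by
    have : c - d = (a + b) ^ p - a ^ p - b ^ p := by rw [hc, hd, ← hxa, ← hyb]; ring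
    rw [this]
    exact h_binom u t hu a b hva hvb
  have hkey := g_pow u (t ^ p) hu hu1 c d hvc hvd hcd m
  have h1 : c ^ p ^ m = aseq p x.1 y.1 n (m+1) := by
    rw [hc, aseq, ← pow_mul, ← pow_succ']
  have h2 : d ^ p ^ m = aseq p x.1 y.1 n m := by rw [hd, aseq]
  have h3 : (t ^ p) ^ p ^ m = Wb p x y n := by
    rw [← pow_mul, ← pow_succ', ← Wb_pow x y n (m+1)]
  rw [h1, h2, h3] at hkey
  exact hkey

lemma add_diff_le (u : NNReal) (hu : vv (p : C) ≤ u) (hu1 : u ≤ 1)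
    (x y : TiltCarrier C p) (n m k : ℕ) :
    vv (aseq p x.1 y.1 n (m + k) - aseq p x.1 y.1 n m) ≤ u ^ (m+1) * Wb p x y n := by
  induction k with
  | zero => simp
  | succ k ih =>
    have hsplit : aseq p x.1 y.1 n (m + (k+1)) - aseq p x.1 y.1 n m
        = (aseq p x.1 y.1 n ((m+k)+1) - aseq p x.1 y.1 n (m+k))
          + (aseq p x.1 y.1 n (m+k) - aseq p x.1 y.1 n m) := by
      have : m + (k+1) = (m+k)+1 := by omega
      rw [this]; ring
    rw [hsplit]
    apply Valuation.map_add_le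
    · refine le_trans (add_step u hu hu1 x y n (m+k)) ?_
      exact mul_le_mul_left (pow_le_pow_of_le_one zero_le hu1 (by omega)) _
    · exact ih


variable [CompleteSpace C]

lemma add_cauchySeq (hp1 : vv (p : C) < 1) (x y : TiltCarrier C p) (n : ℕ) :
    CauchySeq (aseq p x.1 y.1 n) := by
  set u := vv (p : C) with hu
  rw [CauchySeq, Valued.cauchy_iff]
  refine ⟨map_neBot, fun γ => ?_⟩
  have htz : Tendsto (fun m => u ^ (m+1) * Wb p x y n) atTop (nhds 0) := by
    have h1 : Tendsto (fun m : ℕ => u ^ (m+1)) atTop (nhds 0) := by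
      have := NNReal.tendsto_pow_atTop_nhds_zero_of_lt_one hp1
      exact (tendsto_add_atTop_iff_nat 1).mpr this
    simpa using h1.mul_const (Wb p x y n)
  have hpos : (0 : NNReal) < MonoidWithZeroHom.ValueGroup₀.embedding γ.1 := by
    simpa using MonoidWithZeroHom.ValueGroup₀.embedding_strictMono (Units.zero_lt γ)
  obtain ⟨m0, hm0⟩ := (htz.eventually_lt_const hpos).exists
  refine ⟨aseq p x.1 y.1 n '' Set.Ici m0, Filter.image_mem_map (Filter.Ici_mem_atTop m0), ?_⟩
  rintro _ ⟨i, hi, rfl⟩ _ ⟨j, hj, rfl⟩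
  have hi' : m0 ≤ i := hi
  have hj' : m0 ≤ j := hj
  rcases le_total i j with hij | hij
  · obtain ⟨k, rfl⟩ := Nat.exists_eq_add_of_le hij
    refine (Valuation.restrict_lt_iff_lt_embedding (v := vv)).mpr (lt_of_le_of_lt (le_trans (add_diff_le u le_rfl hp1.le x y n i k) ?_) hm0)
    exact mul_le_mul_left (pow_le_pow_of_le_one zero_le hp1.le (by omega)) _
  · rw [Valuation.map_sub_swap]
    obtain ⟨k, rfl⟩ := Nat.exists_eq_add_of_le hij
    refine (Valuation.restrict_lt_iff_lt_embedding (v := vv)).mpr (lt_of_le_of_lt (le_trans (add_diff_le u le_rfl hp1.le x y n j k) ?_) hm0)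
    exact mul_le_mul_left (pow_le_pow_of_le_one zero_le hp1.le (by omega)) _

variable (p) in
/-- The limit defining the sum. -/
noncomputable def addZ (hp1 : vv (p : C) < 1) (x y : TiltCarrier C p) (n : ℕ) : C :=
  (cauchySeq_tendsto_of_complete (add_cauchySeq hp1 x y n)).choose

lemma addZ_tendsto (hp1 : vv (p : C) < 1) (x y : TiltCarrier C p) (n : ℕ) :
    Tendsto (aseq p x.1 y.1 n) atTop (nhds (addZ p hp1 x y n)) :=
  (cauchySeq_tendsto_of_complete (add_cauchySeq hp1 x y n)).choose_spec

lemma addZ_spec (hp1 : vv (p : C) < 1) (x y : TiltCarrier C p) (n : ℕ) :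
    (addZ p hp1 x y (n+1)) ^ p = addZ p hp1 x y n := by
  have h1 : Tendsto (fun m => (aseq p x.1 y.1 (n+1) m) ^ p) atTop
      (nhds ((addZ p hp1 x y (n+1)) ^ p)) := (addZ_tendsto hp1 x y (n+1)).pow p
  have h2 : (fun m => (aseq p x.1 y.1 (n+1) m) ^ p) = fun m => aseq p x.1 y.1 n (m+1) := by
    funext m
    show ((x.1 ((n+1) + m) + y.1 ((n+1) + m)) ^ p ^ m) ^ p
      = (x.1 (n + (m+1)) + y.1 (n + (m+1))) ^ p ^ (m+1)
    have hidx : (n+1) + m = n + (m+1) := by omega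
    rw [hidx, ← pow_mul, ← pow_succ]
  have h3 : Tendsto (fun m => aseq p x.1 y.1 n (m+1)) atTop (nhds (addZ p hp1 x y n)) :=
    (tendsto_add_atTop_iff_nat 1).mpr (addZ_tendsto hp1 x y n)
  rw [h2] at h1
  exact tendsto_nhds_unique h1 h3

variable (p) in
/-- Addition on the tilt. -/
noncomputable def radd (hp1 : vv (p : C) < 1) (x y : TiltCarrier C p) : TiltCarrier C p :=
  ⟨addZ p hp1 x y, addZ_spec hp1 x y⟩

lemma addZ_sub_le (hp1 : vv (p : C) < 1) (x y : TiltCarrier C p) (n : ℕ) :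
    vv (addZ p hp1 x y n - (x.1 n + y.1 n)) ≤ vv (p : C) * Wb p x y n := by
  apply v_lim_le (addZ_tendsto hp1 x y n)
  intro m
  have h0 : aseq p x.1 y.1 n 0 = x.1 n + y.1 n := by
    show (x.1 (n+0) + y.1 (n+0)) ^ p ^ 0 = _
    simp
  rw [← h0]
  simpa using add_diff_le (vv (p : C)) le_rfl hp1.le x y n 0 m

lemma addZ_v_le (hp1 : vv (p : C) < 1) (x y : TiltCarrier C p) (n : ℕ) :
    vv (addZ p hp1 x y n) ≤ Wb p x y n := by
  have h1 : addZ p hp1 x y n = (addZ p hp1 x y n - (x.1 n + y.1 n)) + (x.1 n + y.1 n) := by ring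
  rw [h1]
  apply Valuation.map_add_le
  · refine le_trans (addZ_sub_le hp1 x y n) ?_
    calc vv (p : C) * Wb p x y n ≤ 1 * Wb p x y n := mul_le_mul_left hp1.le _
    _ = Wb p x y n := one_mul _
  · exact Valuation.map_add_le _ (le_max_left _ _) (le_trans (le_max_left _ _) (le_max_right _ _))

/-- Key comparison: two sequences with close terms have the same `p^m`-power limits. -/
lemma key_cmp (hp1 : vv (p : C) < 1) {A B : ℕ → C} {t : ℕ → NNReal} {W' : NNReal}
    (hA : ∀ m, vv (A m) ≤ t m) (hB : ∀ m, vv (B m) ≤ t m)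
    (hAB : ∀ m, vv (A m - B m) ≤ vv (p : C) * t m)
    (ht : ∀ m, (t m) ^ p ^ m = W') {L : C}
    (hL : Tendsto (fun m => A m ^ p ^ m) atTop (nhds L)) :
    Tendsto (fun m => B m ^ p ^ m) atTop (nhds L) := by
  set u := vv (p : C)
  have hdiff : ∀ m, vv (A m ^ p ^ m - B m ^ p ^ m) ≤ u ^ (m+1) * W' := by
    intro m
    have := g_pow u (t m) le_rfl hp1.le (A m) (B m) (hA m) (hB m) (hAB m) m
    rwa [ht m] at this
  have h0 : Tendsto (fun m => A m ^ p ^ m - B m ^ p ^ m) atTop (nhds (0 : C)) := by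
    apply tendsto_zero_of_v_le hdiff
    have h1 : Tendsto (fun m : ℕ => u ^ (m+1)) atTop (nhds 0) :=
      (tendsto_add_atTop_iff_nat 1).mpr (NNReal.tendsto_pow_atTop_nhds_zero_of_lt_one hp1)
    simpa using h1.mul_const W'
  have := hL.sub h0
  simpa using this


variable (p) (C) in
def rzero : TiltCarrier C p := ⟨fun _ => 0, fun _ => zero_pow hp.out.pos.ne'⟩

variable (p) (C) in
def rone : TiltCarrier C p := ⟨fun _ => 1, fun _ => one_pow p⟩

variable (p) in
def rmul (x y : TiltCarrier C p) : TiltCarrier C p :=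
  ⟨fun n => x.1 n * y.1 n, fun n => by rw [mul_pow, x.2, y.2]⟩

variable (p) (C) in
/-- The sign `ε`: `1` if `p = 2`, `-1` otherwise; satisfies `ε^p = ε`. -/
def rsign : C := if p = 2 then 1 else -1

lemma rsign_pow : (rsign p C) ^ p = rsign p C := by
  rw [rsign]
  split_ifs with h
  · rw [one_pow]
  · exact (hp.out.odd_of_ne_two h).neg_one_pow

variable (p) in
def rneg (x : TiltCarrier C p) : TiltCarrier C p :=
  ⟨fun n => rsign p C * x.1 n, fun n => by rw [mul_pow, rsign_pow, x.2]⟩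

lemma radd_comm (hp1 : vv (p : C) < 1) (x y : TiltCarrier C p) :
    radd p hp1 x y = radd p hp1 y x := by
  apply Subtype.ext; funext n
  show addZ p hp1 x y n = addZ p hp1 y x n
  have h1 : aseq p x.1 y.1 n = aseq p y.1 x.1 n := by
    funext m; show (x.1 (n+m) + y.1 (n+m)) ^ p ^ m = (y.1 (n+m) + x.1 (n+m)) ^ p ^ m
    rw [add_comm]
  exact tendsto_nhds_unique (h1 ▸ addZ_tendsto hp1 x y n) (addZ_tendsto hp1 y x n)

lemma radd_zero (hp1 : vv (p : C) < 1) (x : TiltCarrier C p) :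
    radd p hp1 x (rzero p C) = x := by
  apply Subtype.ext; funext n
  show addZ p hp1 x (rzero p C) n = x.1 n
  have h1 : aseq p x.1 (rzero p C).1 n = fun _ => x.1 n := by
    funext m
    show (x.1 (n+m) + 0) ^ p ^ m = x.1 n
    rw [add_zero, entry_pow_eq]
  exact tendsto_nhds_unique (addZ_tendsto hp1 x (rzero p C) n) (h1 ▸ tendsto_const_nhds)

lemma rneg_radd (hp1 : vv (p : C) < 1) (x : TiltCarrier C p) :
    radd p hp1 (rneg p x) x = rzero p C := by
  apply Subtype.ext; funext n
  show addZ p hp1 (rneg p x) x n = 0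
  set u := vv (p : C)
  have hsign : vv (rsign p C + 1) ≤ u := by
    rw [rsign]
    split_ifs with h
    · have : (1 : C) + 1 = ((p : ℕ) : C) := by subst h; norm_num
      rw [this]
    · simp
  have h1 : ∀ m, aseq p (rneg p x).1 x.1 n m = (rsign p C + 1) ^ p ^ m * x.1 n := by
    intro m
    show (rsign p C * x.1 (n+m) + x.1 (n+m)) ^ p ^ m = _
    rw [← add_one_mul, mul_pow, entry_pow_eq]
  have h2 : Tendsto (aseq p (rneg p x).1 x.1 n) atTop (nhds (0 : C)) := by
    apply tendsto_zero_of_v_le (g := fun m => u ^ m * vv (x.1 n))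
    · intro m
      rw [h1 m, map_mul, map_pow]
      refine mul_le_mul_left ?_ _
      calc vv (rsign p C + 1) ^ p ^ m ≤ u ^ p ^ m := pow_le_pow_left' hsign _
      _ ≤ u ^ m := pow_le_pow_of_le_one zero_le hp1.le (Nat.le_of_lt (Nat.lt_pow_self hp.out.one_lt))
    · simpa using (NNReal.tendsto_pow_atTop_nhds_zero_of_lt_one hp1).mul_const (vv (x.1 n))
  exact tendsto_nhds_unique (addZ_tendsto hp1 (rneg p x) x n) h2

lemma rmul_radd (hp1 : vv (p : C) < 1) (x y z : TiltCarrier C p) :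
    rmul p x (radd p hp1 y z) = radd p hp1 (rmul p x y) (rmul p x z) := by
  apply Subtype.ext; funext n
  show x.1 n * addZ p hp1 y z n = addZ p hp1 (rmul p x y) (rmul p x z) n
  have h1 : ∀ m, aseq p (rmul p x y).1 (rmul p x z).1 n m = x.1 n * aseq p y.1 z.1 n m := by
    intro m
    show (x.1 (n+m) * y.1 (n+m) + x.1 (n+m) * z.1 (n+m)) ^ p ^ m
      = x.1 n * (y.1 (n+m) + z.1 (n+m)) ^ p ^ m
    rw [← mul_add, mul_pow, entry_pow_eq]
  have h2 : Tendsto (aseq p (rmul p x y).1 (rmul p x z).1 n) atTop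
      (nhds (x.1 n * addZ p hp1 y z n)) := by
    have := (addZ_tendsto hp1 y z n).const_mul (x.1 n)
    simpa [funext h1] using this
  exact (tendsto_nhds_unique (addZ_tendsto hp1 (rmul p x y) (rmul p x z) n) h2).symm

lemma radd_assoc (hp1 : vv (p : C) < 1) (x y z : TiltCarrier C p) :
    radd p hp1 (radd p hp1 x y) z = radd p hp1 x (radd p hp1 y z) := by
  apply Subtype.ext; funext n
  show addZ p hp1 (radd p hp1 x y) z n = addZ p hp1 x (radd p hp1 y z) n
  set u := vv (p : C)
  set t : ℕ → NNReal := fun m =>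
    max (vv (x.1 (n+m))) (max (vv (y.1 (n+m))) (max (vv (z.1 (n+m))) 1)) with htdef
  have ht : ∀ m, (t m) ^ p ^ m = t 0 := by
    intro m
    rw [htdef]
    simp only [nn_max_pow, one_pow, v_entry]
    rw [show n + 0 = n from rfl]
  have htW1 : ∀ m, Wb p x y (n+m) ≤ t m := by
    intro m
    apply max_le (le_max_left _ _)
    apply max_le (le_trans (le_max_left _ _) (le_max_right _ _))
    exact le_trans (le_max_right _ _) (le_trans (le_max_right _ _) (le_max_right _ _))
  have htW2 : ∀ m, Wb p y z (n+m) ≤ t m := by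
    intro m
    apply max_le (le_trans (le_max_left _ _) (le_max_right _ _))
    apply max_le (le_trans (le_max_left _ _) (le_trans (le_max_right _ _) (le_max_right _ _)))
    exact le_trans (le_max_right _ _) (le_trans (le_max_right _ _) (le_max_right _ _))
  have hvx : ∀ m, vv (x.1 (n+m)) ≤ t m := fun m => le_max_left _ _
  have hvy : ∀ m, vv (y.1 (n+m)) ≤ t m := fun m => le_trans (le_max_left _ _) (le_max_right _ _)
  have hvz : ∀ m, vv (z.1 (n+m)) ≤ t m :=
    fun m => le_trans (le_max_left _ _) (le_trans (le_max_right _ _) (le_max_right _ _))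
  -- B m : the symmetric triple sum
  set B : ℕ → C := fun m => x.1 (n+m) + y.1 (n+m) + z.1 (n+m) with hB
  have hvB : ∀ m, vv (B m) ≤ t m := fun m =>
    Valuation.map_add_le _ (Valuation.map_add_le _ (hvx m) (hvy m)) (hvz m)
  -- left association
  have hL : Tendsto (fun m => B m ^ p ^ m) atTop (nhds (addZ p hp1 (radd p hp1 x y) z n)) := by
    apply key_cmp hp1 (A := fun m => addZ p hp1 x y (n+m) + z.1 (n+m)) (t := t) (W' := t 0)
    · intro m
      exact Valuation.map_add_le _ (le_trans (addZ_v_le hp1 x y (n+m)) (htW1 m)) (hvz m)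
    · exact hvB
    · intro m
      have : addZ p hp1 x y (n+m) + z.1 (n+m) - B m = addZ p hp1 x y (n+m) - (x.1 (n+m) + y.1 (n+m)) := by
        rw [hB]; ring
      rw [this]
      exact le_trans (addZ_sub_le hp1 x y (n+m)) (mul_le_mul_right (htW1 m) _)
    · exact ht
    · exact addZ_tendsto hp1 (radd p hp1 x y) z n
  -- right association
  have hR : Tendsto (fun m => B m ^ p ^ m) atTop (nhds (addZ p hp1 x (radd p hp1 y z) n)) := by
    apply key_cmp hp1 (A := fun m => x.1 (n+m) + addZ p hp1 y z (n+m)) (t := t) (W' := t 0)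
    · intro m
      exact Valuation.map_add_le _ (hvx m) (le_trans (addZ_v_le hp1 y z (n+m)) (htW2 m))
    · exact hvB
    · intro m
      have : x.1 (n+m) + addZ p hp1 y z (n+m) - B m = addZ p hp1 y z (n+m) - (y.1 (n+m) + z.1 (n+m)) := by
        rw [hB]; ring
      rw [this]
      exact le_trans (addZ_sub_le hp1 y z (n+m)) (mul_le_mul_right (htW2 m) _)
    · exact ht
    · exact addZ_tendsto hp1 x (radd p hp1 y z) n
  exact tendsto_nhds_unique hL hR


variable (p) (C) in
/-- The commutative ring structure on the tilt. -/
noncomputable def tiltCommRing (hp1 : vv (p : C) < 1) : CommRing (TiltCarrier C p) where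
  add := radd p hp1
  zero := rzero p C
  neg := rneg p
  mul := rmul p
  one := rone p C
  nsmul := @nsmulRec _ ⟨rzero p C⟩ ⟨radd p hp1⟩
  zsmul := @zsmulRec _ ⟨rzero p C⟩ ⟨radd p hp1⟩ ⟨rneg p⟩
    (@nsmulRec _ ⟨rzero p C⟩ ⟨radd p hp1⟩)
  add_assoc := radd_assoc hp1
  add_comm := radd_comm hp1
  zero_add x := by show radd p hp1 (rzero p C) x = x; rw [radd_comm hp1]; exact radd_zero hp1 x
  add_zero := radd_zero hp1
  neg_add_cancel := rneg_radd hp1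
  mul_assoc x y z := by apply Subtype.ext; funext n; exact mul_assoc _ _ _
  one_mul x := by apply Subtype.ext; funext n; exact one_mul _
  mul_one x := by apply Subtype.ext; funext n; exact mul_one _
  mul_comm x y := by apply Subtype.ext; funext n; exact mul_comm _ _
  zero_mul x := by apply Subtype.ext; funext n; exact zero_mul _
  mul_zero x := by apply Subtype.ext; funext n; exact mul_zero _
  left_distrib x y z := rmul_radd hp1 x y z
  right_distrib x y z := by
    have hc : ∀ a b : TiltCarrier C p, rmul p a b = rmul p b a := by
      intro a b; apply Subtype.ext; funext n; exact mul_comm _ _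
    show rmul p (radd p hp1 x y) z = radd p hp1 (rmul p x z) (rmul p y z)
    rw [hc, rmul_radd hp1, hc z x, hc z y]

section Ring

lemma tilt_natCast_sub_le (hp1 : vv (p : C) < 1) (k : ℕ) (n : ℕ) :
    letI := tiltCommRing p C hp1
    vv (((k : ℕ) : TiltCarrier C p).1 n - (k : C)) ≤ vv (p : C) ∧
      vv (((k : ℕ) : TiltCarrier C p).1 n) ≤ 1 := by
  letI := tiltCommRing p C hp1
  induction k generalizing n with
  | zero =>
    constructor
    · show vv ((rzero p C).1 n - ((0 : ℕ) : C)) ≤ _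
      simp [rzero]
    · show vv ((rzero p C).1 n) ≤ 1
      simp [rzero]
  | succ k ih =>
    have hcast : ((k + 1 : ℕ) : TiltCarrier C p) = ((k : ℕ) : TiltCarrier C p) + 1 := by
      push_cast; ring
    have hentry : (((k : ℕ) : TiltCarrier C p) + 1).1 n
        = addZ p hp1 ((k : ℕ) : TiltCarrier C p) (rone p C) n := rfl
    have hWle : Wb p ((k : ℕ) : TiltCarrier C p) (rone p C) n = 1 := by
      rw [Wb]
      have h1 : vv ((rone p C).1 n) = 1 := by simp [rone]
      rw [h1]
      simp [(ih n).2]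
    have hstep := addZ_sub_le hp1 ((k : ℕ) : TiltCarrier C p) (rone p C) n
    rw [hWle, mul_one] at hstep
    have hone : (rone p C).1 n = 1 := rfl
    have hsplit : ((k + 1 : ℕ) : TiltCarrier C p).1 n - ((k + 1 : ℕ) : C)
        = (addZ p hp1 ((k : ℕ) : TiltCarrier C p) (rone p C) n
            - ((((k : ℕ) : TiltCarrier C p)).1 n + (rone p C).1 n))
          + ((((k : ℕ) : TiltCarrier C p)).1 n - ((k : ℕ) : C)) := by
      rw [hcast, hentry, hone]
      push_cast
      ring
    constructor
    · rw [hsplit]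
      exact Valuation.map_add_le _ hstep (ih n).1
    · have h2 : ((k+1 : ℕ) : TiltCarrier C p).1 n
          = (((k+1 : ℕ) : TiltCarrier C p).1 n - ((k+1 : ℕ) : C)) + ((k+1 : ℕ) : C) := by ring
      rw [h2]
      apply Valuation.map_add_le
      · rw [hsplit]
        exact le_trans (Valuation.map_add_le _ hstep (ih n).1) hp1.le
      · exact v_natCast_le_one (k+1)

lemma tilt_p_eq_zero (hp1 : vv (p : C) < 1) :
    letI := tiltCommRing p C hp1
    ((p : ℕ) : TiltCarrier C p) = 0 := by
  letI := tiltCommRing p C hp1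
  apply Subtype.ext; funext n
  show ((p : ℕ) : TiltCarrier C p).1 n = 0
  set e : TiltCarrier C p := ((p : ℕ) : TiltCarrier C p) with he
  have hbound : ∀ k, vv (e.1 k) ≤ vv (p : C) := by
    intro k
    have h1 := (tilt_natCast_sub_le hp1 p k).1
    have h2 : e.1 k = (e.1 k - (p : C)) + (p : C) := by ring
    rw [h2]
    exact Valuation.map_add_le _ h1 le_rfl
  have hle : ∀ m : ℕ, vv (e.1 n) ≤ (vv (p : C)) ^ m := by
    intro m
    have h3 : vv (e.1 n) = (vv (e.1 (n + m))) ^ p ^ m := (v_entry e n m).symm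
    rw [h3]
    calc (vv (e.1 (n+m))) ^ p ^ m ≤ (vv (p : C)) ^ p ^ m := pow_le_pow_left' (hbound (n+m)) _
    _ ≤ (vv (p : C)) ^ m := pow_le_pow_of_le_one zero_le hp1.le
        (Nat.le_of_lt (Nat.lt_pow_self hp.out.one_lt))
  have h0 : vv (e.1 n) ≤ 0 :=
    ge_of_tendsto' (NNReal.tendsto_pow_atTop_nhds_zero_of_lt_one hp1) hle
  have : vv (e.1 n) = 0 := le_antisymm h0 zero_le
  exact (Valuation.zero_iff _).mp this

lemma tilt_nontrivial (hp1 : vv (p : C) < 1) :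
    letI := tiltCommRing p C hp1
    Nontrivial (TiltCarrier C p) := by
  letI := tiltCommRing p C hp1
  refine ⟨⟨0, 1, fun h => ?_⟩⟩
  have := congrArg (fun z : TiltCarrier C p => z.1 0) h
  exact zero_ne_one (α := C) this

lemma tilt_charP (hp1 : vv (p : C) < 1) :
    letI := tiltCommRing p C hp1
    CharP (TiltCarrier C p) p := by
  letI := tiltCommRing p C hp1
  haveI := tilt_nontrivial hp1
  exact (CharP.charP_iff_prime_eq_zero hp.out).mpr (tilt_p_eq_zero hp1)

lemma tilt_pow_entry (hp1 : vv (p : C) < 1) (x : TiltCarrier C p) (k : ℕ) (n : ℕ) :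
    letI := tiltCommRing p C hp1
    (x ^ k).1 n = (x.1 n) ^ k := by
  letI := tiltCommRing p C hp1
  induction k with
  | zero =>
    rw [pow_zero, pow_zero]
    rfl
  | succ k ih =>
    rw [pow_succ, pow_succ, ← ih]
    rfl

lemma tilt_perfect (hp1 : vv (p : C) < 1) (x : TiltCarrier C p) :
    letI := tiltCommRing p C hp1
    ∃! y : TiltCarrier C p, y ^ p = x := by
  letI := tiltCommRing p C hp1
  refine ⟨⟨fun n => x.1 (n+1), fun n => x.2 (n+1)⟩, ?_, ?_⟩
  · apply Subtype.ext; funext n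
    exact (tilt_pow_entry hp1 _ p n).trans (x.2 n)
  · intro y hy
    apply Subtype.ext; funext n
    have h1 : y.1 (n+1) ^ p = y.1 n := y.2 n
    have h2 : (y ^ p).1 (n+1) = x.1 (n+1) := by rw [hy]
    rw [tilt_pow_entry hp1] at h2
    show y.1 n = x.1 (n+1)
    rw [← h1, h2]

end Ring
end TiltAux


/-- **The tilt is a perfect ring of characteristic `p`.**
Let `C` be the completion of an algebraic closure of a complete discrete valuation field
of mixed characteristic `(0,p)`: a complete algebraically closed valued field of
characteristic `0` with `0 < v(p) < 1`. Let `R* = lim← C*` along `x ↦ x^p`, and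
`R = R* ∪ {0}`, realized as sequences `(x_n)` with `x_{n+1}^p = x_n`. Then `R` carries
a commutative ring structure with componentwise multiplication and with addition
`(x_n)+(y_n) = (z_n)`, `z_n = lim_m (x_{n+m}+y_{n+m})^{p^m}`, it has characteristic `p`,
and every element of `R` has a unique `p`-th root (`R` is perfect). -/
theorem tilt_commRing_charP_perfect (p : ℕ) [Fact p.Prime]
    (C : Type) [Field C] [Valued C NNReal] [CompleteSpace C] [IsAlgClosed C] [CharZero C]
    (hp1 : Valued.v (p : C) < 1) (hp0 : Valued.v (p : C) ≠ 0) :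
    ∃ cr : CommRing (TiltCarrier C p), letI := cr;
      (∀ x y : TiltCarrier C p, ∀ n : ℕ,
        Tendsto (fun m : ℕ => (x.1 (n + m) + y.1 (n + m)) ^ p ^ m) atTop
          (nhds ((x + y).1 n))) ∧
      (∀ x y : TiltCarrier C p, ∀ n : ℕ, (x * y).1 n = x.1 n * y.1 n) ∧
      CharP (TiltCarrier C p) p ∧
      (∀ x : TiltCarrier C p, ∃! y : TiltCarrier C p, y ^ p = x) := by
  
  refine ⟨TiltAux.tiltCommRing p C hp1, ?_, ?_, ?_, ?_⟩
  · intro x y n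
    exact TiltAux.addZ_tendsto hp1 x y n
  · intro x y n
    rfl
  · exact TiltAux.tilt_charP hp1
  · exact TiltAux.tilt_perfect hp1
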